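/- Let G be a finite simple graph and k a positive integer, and let G^k denote the disjoint union of k copies of G. Then r̄(G^k) = k · r̄(G), where the minima defining r̄ are taken over homomorphisms into K_n for any sufficiently large n (say n ≥ 2k|V(G)|). -/

import Mathlib

open MeasureTheory

noncomputable section

open scoped Classical in
/-- A graph homomorphism `f : G → H` is even if for every edge `e` of `H`, the number of
edges of `G` mapped by `f` onto `e` is even. -/
def IsEvenHom {V V' : Type} [Fintype V] [Fintype V'] {G : SimpleGraph V} {H : SimpleGraph V'}
    (f : G →g H) : Prop :=
  ∀ e ∈ H.edgeFinset, Even ((G.edgeFinset.filter (fun e' => Sym2.map (⇑f) e' = e)).card)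

open scoped Classical in
/-- The set of `f`-odd vertices of `K_n`: those incident with an edge having an odd number
of preimage edges under `f`. -/
noncomputable def oddVerts {V : Type} [Fintype V] {G : SimpleGraph V} {n : ℕ}
    (f : G →g (⊤ : SimpleGraph (Fin n))) : Finset (Fin n) :=
  Finset.univ.filter (fun v => ∃ e ∈ (⊤ : SimpleGraph (Fin n)).edgeFinset,
    Odd ((G.edgeFinset.filter (fun e' => Sym2.map (⇑f) e' = e)).card) ∧ v ∈ e)

open scoped Classical in
/-- `r(f) = |V(G)| − |f(V(G))| + |V_odd(f)|/2`. -/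
noncomputable def rval {V : Type} [Fintype V] {G : SimpleGraph V} {n : ℕ}
    (f : G →g (⊤ : SimpleGraph (Fin n))) : ℝ :=
  (Fintype.card V : ℝ) - ((Finset.univ.image ⇑f).card : ℝ) + ((oddVerts f).card : ℝ) / 2

/-- `r̄(G) = min { r(f) : f : G → K_n }`. -/
noncomputable def rbar {V : Type} [Fintype V] (G : SimpleGraph V) (n : ℕ) : ℝ :=
  sInf {x : ℝ | ∃ f : G →g (⊤ : SimpleGraph (Fin n)), rval f = x}

open scoped Classical in
/-- `p(G) = min { |V(G)| − |f(V(G))| : f : G → K_n even }`. -/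
noncomputable def pval {V : Type} [Fintype V] (G : SimpleGraph V) (n : ℕ) : ℝ :=
  sInf {x : ℝ | ∃ f : G →g (⊤ : SimpleGraph (Fin n)), IsEvenHom f ∧
    (Fintype.card V : ℝ) - ((Finset.univ.image ⇑f).card : ℝ) = x}

/-- The disjoint union of `k` copies of `G`. -/
def copies {V : Type} (G : SimpleGraph V) (k : ℕ) : SimpleGraph (Fin k × V) where
  Adj a b := a.1 = b.1 ∧ G.Adj a.2 b.2
  symm := ⟨fun _ _ hab => ⟨hab.1.symm, G.symm.symm _ _ hab.2⟩⟩
  loopless := ⟨fun a ha => G.loopless.irrefl a.2 ha.2⟩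

namespace RbarAux
open scoped Classical

variable {V : Type} [Fintype V] {G : SimpleGraph V} {n : ℕ}

open scoped Classical in
/-- number of edges of `G` mapped onto `e`. -/
def cnt (f : G →g (⊤ : SimpleGraph (Fin n))) (e : Sym2 (Fin n)) : ℕ :=
  (G.edgeFinset.filter (fun e' => Sym2.map (⇑f) e' = e)).card

lemma mem_oddVerts {f : G →g (⊤ : SimpleGraph (Fin n))} {w : Fin n} :
    w ∈ oddVerts f ↔ ∃ e ∈ (⊤ : SimpleGraph (Fin n)).edgeFinset, Odd (cnt f e) ∧ w ∈ e := by
  simp [oddVerts, cnt]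

lemma exists_preimage_of_cnt_pos {f : G →g (⊤ : SimpleGraph (Fin n))} {e : Sym2 (Fin n)}
    (h : 0 < cnt f e) : ∃ e₀ ∈ G.edgeFinset, Sym2.map (⇑f) e₀ = e := by
  classical
  obtain ⟨e₀, he₀⟩ := Finset.card_pos.mp h
  rw [Finset.mem_filter] at he₀
  exact ⟨e₀, he₀.1, he₀.2⟩

lemma oddVerts_subset_image (f : G →g (⊤ : SimpleGraph (Fin n))) :
    oddVerts f ⊆ Finset.univ.image ⇑f := by
  intro w hw
  rw [mem_oddVerts] at hw
  obtain ⟨e, _, hodd, hwe⟩ := hw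
  obtain ⟨e₀, he₀, hmap⟩ := exists_preimage_of_cnt_pos hodd.pos
  subst hmap
  obtain ⟨a, _, ha⟩ := Sym2.mem_map.mp hwe
  exact Finset.mem_image.mpr ⟨a, Finset.mem_univ a, ha⟩

/-- restriction of a homomorphism on `copies G k` to the `i`-th copy. -/
def restrictHom {k : ℕ} (F : copies G k →g (⊤ : SimpleGraph (Fin n))) (i : Fin k) :
    G →g (⊤ : SimpleGraph (Fin n)) where
  toFun := fun v => F (i, v)
  map_rel' := fun h => F.map_rel' ⟨rfl, h⟩


omit [Fintype V] in
lemma restrictHom_apply {k : ℕ} (F : copies G k →g (⊤ : SimpleGraph (Fin n))) (i : Fin k)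
    (v : V) : restrictHom F i v = F (i, v) := rfl

lemma copies_edgeFinset (k : ℕ) :
    (copies G k).edgeFinset =
      Finset.univ.biUnion
        (fun i : Fin k => G.edgeFinset.image (Sym2.map (fun v => (i, v)))) := by
  classical
  ext e
  induction e with
  | _ a b =>
    obtain ⟨i, x⟩ := a
    obtain ⟨j, y⟩ := b
    simp only [SimpleGraph.mem_edgeFinset, Finset.mem_biUnion, Finset.mem_univ, true_and,
      Finset.mem_image]
    constructor
    · rintro h
      rw [SimpleGraph.mem_edgeSet] at h
      obtain ⟨h1, h2⟩ := h
      dsimp only at h1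
      subst h1
      exact ⟨i, s(x, y), (SimpleGraph.mem_edgeSet G).mpr h2, by rw [Sym2.map_pair_eq]⟩
    · rintro ⟨i', d, hd, hmap⟩
      revert hmap
      induction d with
      | _ x' y' =>
        intro hmap
        rw [Sym2.map_pair_eq, Sym2.eq_iff] at hmap
        rw [SimpleGraph.mem_edgeSet] at hd
        rw [SimpleGraph.mem_edgeSet]
        rcases hmap with ⟨h1, h2⟩ | ⟨h1, h2⟩ <;>
          simp only [Prod.mk.injEq] at h1 h2
        · obtain ⟨rfl, rfl⟩ := h1
          obtain ⟨rfl, rfl⟩ := h2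
          exact ⟨rfl, hd⟩
        · obtain ⟨rfl, rfl⟩ := h1
          obtain ⟨rfl, rfl⟩ := h2
          exact ⟨rfl, hd.symm⟩

lemma cnt_copies {k : ℕ} (F : copies G k →g (⊤ : SimpleGraph (Fin n))) (e : Sym2 (Fin n)) :
    cnt F e = ∑ i : Fin k, cnt (restrictHom F i) e := by
  classical
  unfold cnt
  rw [copies_edgeFinset, Finset.filter_biUnion, Finset.card_biUnion]
  · apply Finset.sum_congr rfl
    intro i _
    rw [Finset.filter_image, Finset.card_image_of_injective _
      (Sym2.map.injective (fun x y h => congrArg Prod.snd h))]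
    congr 1
    apply Finset.filter_congr
    intro e' _
    rw [Sym2.map_map]
    rfl
  · intro i _ j _ hij
    simp only [Function.onFun]
    rw [Finset.disjoint_left]
    intro e' he' he''
    apply hij
    simp only [Finset.mem_filter, Finset.mem_image] at he' he''
    obtain ⟨⟨d, _, hd⟩, _⟩ := he'
    obtain ⟨⟨d', _, hd'⟩, _⟩ := he''
    subst hd
    revert hd'
    induction d with
    | _ x y =>
      induction d' with
      | _ x' y' =>
        intro hd'
        rw [Sym2.map_pair_eq, Sym2.map_pair_eq, Sym2.eq_iff] at hd'
        rcases hd' with ⟨h1, _⟩ | ⟨h1, _⟩ <;> exact (congrArg Prod.fst h1).symm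

lemma image_copies {k : ℕ} (F : copies G k →g (⊤ : SimpleGraph (Fin n))) :
    Finset.univ.image ⇑F =
      Finset.univ.biUnion (fun i : Fin k => Finset.univ.image ⇑(restrictHom F i)) := by
  classical
  ext w
  simp only [Finset.mem_image, Finset.mem_biUnion, Finset.mem_univ, true_and,
    restrictHom_apply, Prod.exists]


lemma odd_cnt_exists {k : ℕ} {F : copies G k →g (⊤ : SimpleGraph (Fin n))} {e : Sym2 (Fin n)}
    (h : Odd (cnt F e)) : ∃ i : Fin k, Odd (cnt (restrictHom F i) e) := by
  by_contra hcon
  push_neg at hcon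
  rw [cnt_copies] at h
  rw [Nat.not_even_iff_odd.symm] at h
  exact h (Finset.even_sum _ (fun i _ => Nat.not_odd_iff_even.mp (hcon i)))

lemma mem_image_of_cnt_pos {f : G →g (⊤ : SimpleGraph (Fin n))} {e : Sym2 (Fin n)} {w : Fin n}
    (h : 0 < cnt f e) (hw : w ∈ e) : w ∈ Finset.univ.image ⇑f := by
  obtain ⟨e₀, _, hmap⟩ := exists_preimage_of_cnt_pos h
  subst hmap
  obtain ⟨a, _, ha⟩ := Sym2.mem_map.mp hw
  exact Finset.mem_image.mpr ⟨a, Finset.mem_univ a, ha⟩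

lemma sum_rval_le {k : ℕ} (F : copies G k →g (⊤ : SimpleGraph (Fin n))) :
    ∑ i : Fin k, rval (restrictHom F i) ≤ rval F := by
  classical
  set A : Fin k → Finset (Fin n) := fun i => Finset.univ.image ⇑(restrictHom F i) with hA
  set O : Fin k → Finset (Fin n) := fun i => oddVerts (restrictHom F i) with hO
  set c : Fin n → ℕ := fun w => (Finset.univ.filter (fun i => w ∈ A i)).card with hc
  set m : Fin n → ℕ := fun w => (Finset.univ.filter (fun i => w ∈ O i)).card with hm
  have hone : ∀ (s : Finset (Fin n)), ∑ w : Fin n, (if w ∈ s then (1 : ℕ) else 0) = s.card := by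
    intro s
    rw [Finset.sum_ite_mem, Finset.univ_inter, Finset.card_eq_sum_ones]
  have hsumA : ∑ i : Fin k, (A i).card = ∑ w : Fin n, c w := by
    simp only [hc, Finset.card_filter]
    rw [Finset.sum_comm]
    exact Finset.sum_congr rfl (fun i _ => (hone (A i)).symm)
  have hsumO : ∑ i : Fin k, (O i).card = ∑ w : Fin n, m w := by
    simp only [hm, Finset.card_filter]
    rw [Finset.sum_comm]
    exact Finset.sum_congr rfl (fun i _ => (hone (O i)).symm)
  have himF : (Finset.univ.image ⇑F).card
      = ∑ w : Fin n, (if 0 < c w then (1 : ℕ) else 0) := by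
    have himg : Finset.univ.image ⇑F = Finset.univ.filter (fun w => 0 < c w) := by
      rw [image_copies]
      ext w
      simp only [Finset.mem_biUnion, Finset.mem_univ, true_and, Finset.mem_filter, hc, hA,
        Finset.card_pos, Finset.filter_nonempty_iff]
    rw [himg, Finset.card_filter]
  have hoddF : (oddVerts F).card = ∑ w : Fin n, (if w ∈ oddVerts F then (1 : ℕ) else 0) :=
    (hone _).symm
  have hOA : ∀ i, O i ⊆ A i := fun i => oddVerts_subset_image _
  have hmc : ∀ w, m w ≤ c w := by
    intro w
    apply Finset.card_le_card
    intro i hi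
    rw [Finset.mem_filter] at hi ⊢
    exact ⟨hi.1, hOA i hi.2⟩
  have hpt : ∀ w : Fin n, m w + 2 * (if 0 < c w then (1 : ℕ) else 0)
      ≤ (if w ∈ oddVerts F then (1 : ℕ) else 0) + 2 * c w := by
    intro w
    by_cases hw : w ∈ oddVerts F
    · have hcpos : 0 < c w := by
        rw [mem_oddVerts] at hw
        obtain ⟨e, he, hodd, hwe⟩ := hw
        obtain ⟨i, hi⟩ := odd_cnt_exists hodd
        have : w ∈ A i := mem_image_of_cnt_pos hi.pos hwe
        rw [hc]
        exact Finset.card_pos.mpr ⟨i, Finset.mem_filter.mpr ⟨Finset.mem_univ i, this⟩⟩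
      simp only [hw, if_true, hcpos]
      have := hmc w
      omega
    · by_cases hc1 : c w = 1
      · have hm0 : m w = 0 := by
          by_contra hm0
          obtain ⟨i, hi⟩ := Finset.filter_nonempty_iff.mp
            (Finset.card_pos.mp (Nat.pos_of_ne_zero hm0))
          obtain ⟨-, hiO⟩ := hi
          rw [hO] at hiO
          rw [mem_oddVerts] at hiO
          obtain ⟨e, he, hodd, hwe⟩ := hiO
          have hwAi : w ∈ A i := hOA i (by rw [hO]; rw [mem_oddVerts]; exact ⟨e, he, hodd, hwe⟩)
          have hzero : ∀ j : Fin k, j ≠ i → cnt (restrictHom F j) e = 0 := by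
            intro j hji
            by_contra hj0
            have hwAj : w ∈ A j := mem_image_of_cnt_pos (Nat.pos_of_ne_zero hj0) hwe
            have hsub : ({j, i} : Finset (Fin k)) ⊆ Finset.univ.filter (fun i' => w ∈ A i') := by
              intro x hx
              rw [Finset.mem_insert, Finset.mem_singleton] at hx
              rcases hx with rfl | rfl <;>
                exact Finset.mem_filter.mpr ⟨Finset.mem_univ _, by assumption⟩
            have h2le : 2 ≤ c w := by
              rw [hc]
              calc 2 = ({j, i} : Finset (Fin k)).card := (Finset.card_pair hji).symm
              _ ≤ _ := Finset.card_le_card hsub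
            omega
          have hFe : cnt F e = cnt (restrictHom F i) e := by
            rw [cnt_copies]
            exact Finset.sum_eq_single i (fun j _ hj => hzero j hj)
              (fun h => absurd (Finset.mem_univ i) h)
          rw [mem_oddVerts] at hw
          push_neg at hw
          have heven := hw e he
          rw [hFe] at heven
          exact (heven hodd) hwe
        simp [hw, hc1, hm0]
      · by_cases hc0 : 0 < c w
        · simp only [hw, if_false, hc0, if_true]
          have := hmc w
          omega
        · have hczero : c w = 0 := by omega
          have := hmc w
          simp only [hw, if_false, hc0]
          omega
  have key : ∑ i : Fin k, (O i).card + 2 * (Finset.univ.image ⇑F).card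
      ≤ (oddVerts F).card + 2 * ∑ i : Fin k, (A i).card := by
    rw [hsumO, himF, hoddF, hsumA, Finset.mul_sum, Finset.mul_sum,
      ← Finset.sum_add_distrib, ← Finset.sum_add_distrib]
    exact Finset.sum_le_sum (fun w _ => hpt w)
  have keyR : (∑ i : Fin k, ((O i).card : ℝ)) + 2 * ((Finset.univ.image ⇑F).card : ℝ)
      ≤ ((oddVerts F).card : ℝ) + 2 * ∑ i : Fin k, ((A i).card : ℝ) := by
    exact_mod_cast key
  have hlhs : ∑ i : Fin k, rval (restrictHom F i)
      = (k : ℝ) * (Fintype.card V : ℝ) - ∑ i : Fin k, ((A i).card : ℝ)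
        + (∑ i : Fin k, ((O i).card : ℝ)) / 2 := by
    simp only [rval, ← hA, ← hO]
    rw [Finset.sum_add_distrib, Finset.sum_sub_distrib, Finset.sum_const, Finset.card_univ,
      Fintype.card_fin, Finset.sum_div, nsmul_eq_mul]
  have hrhs : rval F = (k : ℝ) * (Fintype.card V : ℝ) - ((Finset.univ.image ⇑F).card : ℝ)
      + ((oddVerts F).card : ℝ) / 2 := by
    simp only [rval, Fintype.card_prod, Fintype.card_fin]
    push_cast
    ring
  rw [hlhs, hrhs]
  linarith

lemma sym2_map_injOn {α β : Type*} {σ : α → β} {s : Set α} (hσ : Set.InjOn σ s)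
    {z₁ z₂ : Sym2 α} (h₁ : ∀ x ∈ z₁, x ∈ s) (h₂ : ∀ x ∈ z₂, x ∈ s)
    (h : Sym2.map σ z₁ = Sym2.map σ z₂) : z₁ = z₂ := by
  revert h₁ h₂ h
  induction z₁ with
  | _ a b =>
    induction z₂ with
    | _ a' b' =>
      intro h₁ h₂ h
      have ha : a ∈ s := h₁ a (Sym2.mem_iff.mpr (Or.inl rfl))
      have hb : b ∈ s := h₁ b (Sym2.mem_iff.mpr (Or.inr rfl))
      have ha' : a' ∈ s := h₂ a' (Sym2.mem_iff.mpr (Or.inl rfl))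
      have hb' : b' ∈ s := h₂ b' (Sym2.mem_iff.mpr (Or.inr rfl))
      rw [Sym2.map_pair_eq, Sym2.map_pair_eq, Sym2.eq_iff] at h
      rw [Sym2.eq_iff]
      rcases h with ⟨u1, u2⟩ | ⟨u1, u2⟩
      · exact Or.inl ⟨hσ ha ha' u1, hσ hb hb' u2⟩
      · exact Or.inr ⟨hσ ha hb' u1, hσ hb ha' u2⟩

lemma sym2_over_image (f : G →g (⊤ : SimpleGraph (Fin n))) (e' : Sym2 V) :
    ∀ x ∈ Sym2.map (⇑f) e', x ∈ (↑(Finset.univ.image ⇑f) : Set (Fin n)) := by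
  intro x hx
  obtain ⟨a, -, ha⟩ := Sym2.mem_map.mp hx
  simp only [Finset.coe_image, Finset.coe_univ, Set.image_univ, Set.mem_range]
  exact ⟨a, ha⟩

/-- relabeling a homomorphism by a map injective on its image. -/
def relabelHom (f : G →g (⊤ : SimpleGraph (Fin n))) (σ : Fin n → Fin n)
    (hσ : Set.InjOn σ (↑(Finset.univ.image ⇑f) : Set (Fin n))) :
    G →g (⊤ : SimpleGraph (Fin n)) where
  toFun := σ ∘ ⇑f
  map_rel' := by
    intro a b hab
    have h1 : f a ≠ f b := f.map_rel' hab
    simp only [SimpleGraph.top_adj, Function.comp_apply, ne_eq]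
    intro h
    exact h1 (hσ (by simp) (by simp) h)

lemma relabelHom_coe (f : G →g (⊤ : SimpleGraph (Fin n))) (σ : Fin n → Fin n)
    (hσ : Set.InjOn σ (↑(Finset.univ.image ⇑f) : Set (Fin n))) :
    ⇑(relabelHom f σ hσ) = σ ∘ ⇑f := rfl

lemma image_relabel (f : G →g (⊤ : SimpleGraph (Fin n))) (σ : Fin n → Fin n)
    (hσ : Set.InjOn σ (↑(Finset.univ.image ⇑f) : Set (Fin n))) :
    Finset.univ.image ⇑(relabelHom f σ hσ) = (Finset.univ.image ⇑f).image σ := by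
  rw [relabelHom_coe, Finset.image_image]

lemma cnt_relabel (f : G →g (⊤ : SimpleGraph (Fin n))) (σ : Fin n → Fin n)
    (hσ : Set.InjOn σ (↑(Finset.univ.image ⇑f) : Set (Fin n)))
    {d : Sym2 (Fin n)} (hd : ∀ x ∈ d, x ∈ (↑(Finset.univ.image ⇑f) : Set (Fin n))) :
    cnt (relabelHom f σ hσ) (Sym2.map σ d) = cnt f d := by
  unfold cnt
  congr 1
  apply Finset.filter_congr
  intro e' _
  rw [relabelHom_coe, ← Sym2.map_map]
  constructor
  · intro h
    exact sym2_map_injOn hσ (sym2_over_image f e') hd h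
  · intro h
    rw [h]

lemma oddVerts_relabel (f : G →g (⊤ : SimpleGraph (Fin n))) (σ : Fin n → Fin n)
    (hσ : Set.InjOn σ (↑(Finset.univ.image ⇑f) : Set (Fin n))) :
    oddVerts (relabelHom f σ hσ) = (oddVerts f).image σ := by
  ext w
  rw [mem_oddVerts, Finset.mem_image]
  constructor
  · rintro ⟨e, he, hodd, hwe⟩
    obtain ⟨e₀, he₀, hmap⟩ := exists_preimage_of_cnt_pos hodd.pos
    have hmap' : e = Sym2.map σ (Sym2.map ⇑f e₀) := by
      rw [← hmap, relabelHom_coe, ← Sym2.map_map]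
    subst hmap'
    rw [cnt_relabel f σ hσ (sym2_over_image f e₀)] at hodd
    obtain ⟨u, hu, rfl⟩ := Sym2.mem_map.mp hwe
    have hd : Sym2.map (⇑f) e₀ ∈ (⊤ : SimpleGraph (Fin n)).edgeFinset :=
      SimpleGraph.mem_edgeFinset.mpr (f.map_mem_edgeSet (SimpleGraph.mem_edgeFinset.mp he₀))
    exact ⟨u, mem_oddVerts.mpr ⟨Sym2.map (⇑f) e₀, hd, hodd, hu⟩, rfl⟩
  · rintro ⟨u, hu, rfl⟩
    rw [mem_oddVerts] at hu
    obtain ⟨d, hd, hodd, hud⟩ := hu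
    obtain ⟨e₀, he₀, hmap⟩ := exists_preimage_of_cnt_pos hodd.pos
    subst hmap
    refine ⟨Sym2.map σ (Sym2.map (⇑f) e₀), ?_, ?_, ?_⟩
    · have hrw : Sym2.map σ (Sym2.map (⇑f) e₀) = Sym2.map ⇑(relabelHom f σ hσ) e₀ := by
        rw [relabelHom_coe, Sym2.map_map]
      rw [hrw]
      exact SimpleGraph.mem_edgeFinset.mpr
        ((relabelHom f σ hσ).map_mem_edgeSet (SimpleGraph.mem_edgeFinset.mp he₀))
    · rw [cnt_relabel f σ hσ (sym2_over_image f e₀)]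
      exact hodd
    · exact Sym2.mem_map.mpr ⟨u, hud, rfl⟩

lemma exists_copies_hom {k : ℕ} (f : G →g (⊤ : SimpleGraph (Fin n)))
    (hn : k * Fintype.card V ≤ n) :
    ∃ F : copies G k →g (⊤ : SimpleGraph (Fin n)), rval F = (k : ℝ) * rval f := by
  classical
  set A : Finset (Fin n) := Finset.univ.image ⇑f with hAdef
  set a : ℕ := A.card with hadef
  have ha : a ≤ Fintype.card V := le_trans (Finset.card_image_le) (le_of_eq (Finset.card_univ))
  have hka : k * a ≤ n := le_trans (Nat.mul_le_mul_left k ha) hn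
  set eA : {x // x ∈ A} ≃ Fin a := A.equivFin with heA
  set enc : Fin k × Fin a → Fin n := fun p => Fin.castLE hka (finProdFinEquiv p) with henc
  have hencInj : Function.Injective enc := fun p q h =>
    finProdFinEquiv.injective (Fin.castLE_injective hka h)
  set σ : Fin k → Fin n → Fin n :=
    fun i w => if h : w ∈ A then enc (i, eA ⟨w, h⟩) else w with hσdef
  have hσA : ∀ i w (h : w ∈ A), σ i w = enc (i, eA ⟨w, h⟩) := by
    intro i w h
    simp only [hσdef, dif_pos h]
  have hσ : ∀ i, Set.InjOn (σ i) (↑A : Set (Fin n)) := by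
    intro i x hx y hy h
    rw [Finset.mem_coe] at hx hy
    rw [hσA i x hx, hσA i y hy] at h
    have h2 := hencInj h
    have h3 : eA ⟨x, hx⟩ = eA ⟨y, hy⟩ := congrArg Prod.snd h2
    have h4 := eA.injective h3
    exact congrArg Subtype.val h4
  have hblock : ∀ i x, x ∈ A.image (σ i) → ∃ y : Fin a, x = enc (i, y) := by
    intro i x hx
    obtain ⟨w, hw, hwx⟩ := Finset.mem_image.mp hx
    exact ⟨eA ⟨w, hw⟩, by rw [← hwx, hσA i w hw]⟩
  have hdisj : ∀ i j : Fin k, i ≠ j → Disjoint (A.image (σ i)) (A.image (σ j)) := by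
    intro i j hij
    rw [Finset.disjoint_left]
    intro x hxi hxj
    obtain ⟨y, hy⟩ := hblock i x hxi
    obtain ⟨y', hy'⟩ := hblock j x hxj
    apply hij
    have h5 := hencInj (hy ▸ hy')
    exact congrArg Prod.fst h5
  -- the homomorphism on the disjoint copies
  set F : copies G k →g (⊤ : SimpleGraph (Fin n)) :=
    { toFun := fun p => σ p.1 (f p.2),
      map_rel' := by
        rintro ⟨i, v⟩ ⟨i', v'⟩ ⟨h1, h2⟩
        dsimp only at h1 h2 ⊢
        subst h1
        have hne : f v ≠ f v' := f.map_rel' h2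
        rw [SimpleGraph.top_adj]
        intro h
        exact hne (hσ i (by simp [hAdef]) (by simp [hAdef]) h) } with hFdef
  have hres : ∀ i, restrictHom F i = relabelHom f (σ i) (hσ i) := by
    intro i
    rfl
  have himage : Finset.univ.image ⇑F = Finset.univ.biUnion (fun i : Fin k => A.image (σ i)) := by
    rw [image_copies]
    apply Finset.biUnion_congr rfl
    intro i _
    rw [hres i, image_relabel]
  have hcardim : (Finset.univ.image ⇑F).card = k * a := by
    rw [himage, Finset.card_biUnion (fun i _ j _ hij => hdisj i j hij)]
    have : ∀ i : Fin k, (A.image (σ i)).card = a :=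
      fun i => Finset.card_image_of_injOn (hσ i)
    simp [this]
  have hoddsub : ∀ i, oddVerts (relabelHom f (σ i) (hσ i)) ⊆ A.image (σ i) := by
    intro i
    rw [oddVerts_relabel]
    exact Finset.image_subset_image (oddVerts_subset_image f)
  have hoddcopy : oddVerts F =
      Finset.univ.biUnion (fun i : Fin k => oddVerts (restrictHom F i)) := by
    ext w
    rw [mem_oddVerts, Finset.mem_biUnion]
    constructor
    · rintro ⟨e, he, hodd, hwe⟩
      obtain ⟨i, hi⟩ := odd_cnt_exists hodd
      exact ⟨i, Finset.mem_univ i, mem_oddVerts.mpr ⟨e, he, hi, hwe⟩⟩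
    · rintro ⟨i, -, hwi⟩
      rw [mem_oddVerts] at hwi
      obtain ⟨e, he, hodd, hwe⟩ := hwi
      refine ⟨e, he, ?_, hwe⟩
      have hzero : ∀ j : Fin k, j ≠ i → cnt (restrictHom F j) e = 0 := by
        intro j hji
        by_contra hj0
        have hwj : w ∈ Finset.univ.image ⇑(restrictHom F j) :=
          mem_image_of_cnt_pos (Nat.pos_of_ne_zero hj0) hwe
        have hwi' : w ∈ Finset.univ.image ⇑(restrictHom F i) :=
          mem_image_of_cnt_pos hodd.pos hwe
        rw [hres j, image_relabel] at hwj
        rw [hres i, image_relabel] at hwi'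
        exact Finset.disjoint_left.mp (hdisj j i hji) hwj hwi'
      rw [cnt_copies]
      rw [Finset.sum_eq_single i (fun j _ hj => hzero j hj)
        (fun h => absurd (Finset.mem_univ i) h)]
      exact hodd
  have hcardodd : (oddVerts F).card = k * (oddVerts f).card := by
    rw [hoddcopy, Finset.card_biUnion]
    · have : ∀ i : Fin k, (oddVerts (restrictHom F i)).card = (oddVerts f).card := by
        intro i
        rw [hres i, oddVerts_relabel]
        exact Finset.card_image_of_injOn
          ((hσ i).mono (Finset.coe_subset.mpr (oddVerts_subset_image f)))
      simp [this]
    · intro i _ j _ hij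
      simp only [Function.onFun]
      rw [hres i, hres j]
      exact Finset.disjoint_of_subset_left (hoddsub i)
        (Finset.disjoint_of_subset_right (hoddsub j) (hdisj i j hij))
  refine ⟨F, ?_⟩
  unfold rval
  rw [hcardim, hcardodd, Fintype.card_prod, Fintype.card_fin]
  rw [← hAdef, ← hadef]
  push_cast
  ring

instance homFinite : Finite (G →g (⊤ : SimpleGraph (Fin n))) :=
  Finite.of_injective (fun f => (f : V → Fin n)) DFunLike.coe_injective

lemma hom_exists (h : Fintype.card V ≤ n) :
    Nonempty (G →g (⊤ : SimpleGraph (Fin n))) := by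
  obtain ⟨emb⟩ := Function.Embedding.nonempty_of_card_le
    (by simpa [Fintype.card_fin] using h : Fintype.card V ≤ Fintype.card (Fin n))
  exact ⟨⟨emb, fun {a b} hab => by
    simpa [SimpleGraph.top_adj] using emb.injective.ne hab.ne⟩⟩

lemma rvals_finite :
    Set.Finite {x : ℝ | ∃ f : G →g (⊤ : SimpleGraph (Fin n)), rval f = x} := by
  have : {x : ℝ | ∃ f : G →g (⊤ : SimpleGraph (Fin n)), rval f = x}
      = Set.range (fun f : G →g (⊤ : SimpleGraph (Fin n)) => rval f) := rfl
  rw [this]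
  exact Set.finite_range _

lemma rbar_mem (h : Fintype.card V ≤ n) :
    ∃ f : G →g (⊤ : SimpleGraph (Fin n)), rval f = rbar G n := by
  have hne : {x : ℝ | ∃ f : G →g (⊤ : SimpleGraph (Fin n)), rval f = x}.Nonempty := by
    obtain ⟨f⟩ := hom_exists (G := G) h
    exact ⟨rval f, f, rfl⟩
  exact Set.Nonempty.csInf_mem hne rvals_finite

lemma rbar_le (f : G →g (⊤ : SimpleGraph (Fin n))) : rbar G n ≤ rval f :=
  csInf_le rvals_finite.bddBelow ⟨f, rfl⟩

end RbarAux

/-- `r̄(G^k) = k·r̄(G)` for the disjoint union `G^k` of `k` copies of `G`, for all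
sufficiently large target complete graphs `K_n` (say `n ≥ 2k|V(G)|`). -/
theorem rbar_copies {V : Type} [Fintype V] (G : SimpleGraph V) (k : ℕ) (hk : 0 < k) :
    ∀ n : ℕ, 2 * k * Fintype.card V ≤ n →
      rbar (copies G k) n = (k : ℝ) * rbar G n := by
  intro n hn
  have hV : Fintype.card V ≤ n := by
    refine le_trans ?_ hn
    exact Nat.le_mul_of_pos_left _ (by omega)
  have hkV : k * Fintype.card V ≤ n := by
    refine le_trans ?_ hn
    exact Nat.mul_le_mul_right _ (by omega)
  have hVc : Fintype.card (Fin k × V) ≤ n := by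
    rw [Fintype.card_prod, Fintype.card_fin]
    exact hkV
  obtain ⟨f₀, hf₀⟩ := RbarAux.rbar_mem (G := G) hV
  obtain ⟨Fm, hFm⟩ := RbarAux.rbar_mem (G := copies G k) hVc
  apply le_antisymm
  · obtain ⟨F, hF⟩ := RbarAux.exists_copies_hom (k := k) f₀ hkV
    calc rbar (copies G k) n ≤ rval F := RbarAux.rbar_le F
      _ = (k : ℝ) * rval f₀ := hF
      _ = (k : ℝ) * rbar G n := by rw [hf₀]
  · rw [← hFm]
    calc (k : ℝ) * rbar G n = ∑ _i : Fin k, rbar G n := by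
          rw [Finset.sum_const, Finset.card_univ, Fintype.card_fin, nsmul_eq_mul]
      _ ≤ ∑ i : Fin k, rval (RbarAux.restrictHom Fm i) :=
          Finset.sum_le_sum (fun i _ => RbarAux.rbar_le _)
      _ ≤ rval Fm := RbarAux.sum_rval_le Fm
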